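/- Let c be a real number with 1 < c < 3 and c ≠ 2, let ε > 0 be fixed and sufficiently small, let P be sufficiently large and τ = P^{1-c-ε}. Then the number U of quadruples of integers (n1, n2, n3, n4) with P/2 < n1, n2, n3, n4 ≤ P and |[n1^c] + [n2^c] - [n3^c] - [n4^c]| ≤ 1/τ satisfies U ≪ P^3 + τ^{-1}·P^{4-c}. -/

import Mathlib

open scoped Classical
open Finset Real

/-- `quadU c P τ` counts integer quadruples `P/2 < n₁,n₂,n₃,n₄ ≤ P` with
`|[n₁^c] + [n₂^c] - [n₃^c] - [n₄^c]| ≤ 1/τ`. -/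
noncomputable def quadU (c P τ : ℝ) : ℕ :=
  (((Finset.Ioc ⌊P / 2⌋₊ ⌊P⌋₊) ×ˢ (Finset.Ioc ⌊P / 2⌋₊ ⌊P⌋₊) ×ˢ
      (Finset.Ioc ⌊P / 2⌋₊ ⌊P⌋₊) ×ˢ (Finset.Ioc ⌊P / 2⌋₊ ⌊P⌋₊)).filter
    (fun q => |((⌊(q.1 : ℝ) ^ c⌋ + ⌊(q.2.1 : ℝ) ^ c⌋ - ⌊(q.2.2.1 : ℝ) ^ c⌋ -
      ⌊(q.2.2.2 : ℝ) ^ c⌋ : ℤ) : ℝ)| ≤ 1 / τ)).card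

lemma aux_mvt (c : ℝ) (hc : 1 ≤ c) {B x y : ℝ} (hB : 0 < B) (hy : B ≤ y) (hxy : y ≤ x) :
    c * B ^ (c - 1) * (x - y) ≤ x ^ c - y ^ c := by
  have hy0 : (0:ℝ) < y := hB.trans_le hy
  have hx0 : (0:ℝ) < x := hy0.trans_le hxy
  set s : ℝ := (x - y) / y with hs_def
  have hs : 0 ≤ s := div_nonneg (by linarith) hy0.le
  have hbern : 1 + c * s ≤ (1 + s) ^ c :=
    one_add_mul_self_le_rpow_one_add (by linarith) hc
  have h1s : 1 + s = x / y := by rw [hs_def]; field_simp; ring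
  have hxy_rpow : (1 + s) ^ c = x ^ c / y ^ c := by
    rw [h1s, Real.div_rpow hx0.le hy0.le]
  have hyc : (0:ℝ) < y ^ c := Real.rpow_pos_of_pos hy0 c
  have key : y ^ c + c * s * y ^ c ≤ x ^ c := by
    have := mul_le_mul_of_nonneg_right hbern hyc.le
    rw [hxy_rpow, div_mul_cancel₀ _ hyc.ne'] at this
    linarith [this]
  have hsy : s * y ^ c = (x - y) * y ^ (c - 1) := by
    rw [Real.rpow_sub_one hy0.ne', hs_def]
    field_simp
  have hBy : B ^ (c - 1) ≤ y ^ (c - 1) :=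
    Real.rpow_le_rpow hB.le hy (by linarith)
  have hc0 : (0:ℝ) < c := by linarith
  nlinarith [mul_le_mul_of_nonneg_left
    (mul_le_mul_of_nonneg_left hBy (by linarith : (0:ℝ) ≤ x - y)) hc0.le]

lemma aux_count (c : ℝ) (hc : 1 ≤ c) (P τ : ℝ) (hP : 2 ≤ P) (hτ : 0 < τ) (K : ℤ) :
    (((Finset.Ioc ⌊P / 2⌋₊ ⌊P⌋₊).filter
      (fun n : ℕ => |((K - ⌊(n : ℝ) ^ c⌋ : ℤ) : ℝ)| ≤ 1 / τ)).card : ℝ) ≤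
      (2 / τ + 1) / (c * (P / 2) ^ (c - 1)) + 1 := by
  have hc0 : (0:ℝ) < c := by linarith
  have hP2 : (0:ℝ) < P / 2 := by linarith
  have hden : (0:ℝ) < c * (P / 2) ^ (c - 1) :=
    mul_pos hc0 (Real.rpow_pos_of_pos hP2 _)
  set S := (Finset.Ioc ⌊P / 2⌋₊ ⌊P⌋₊).filter
      (fun n : ℕ => |((K - ⌊(n : ℝ) ^ c⌋ : ℤ) : ℝ)| ≤ 1 / τ) with hS
  rcases S.eq_empty_or_nonempty with h | h
  · rw [h]
    simp only [Finset.card_empty, Nat.cast_zero]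
    positivity
  · set a := S.min' h with ha_def
    set b := S.max' h with hb_def
    have ha : a ∈ S := S.min'_mem h
    have hb : b ∈ S := S.max'_mem h
    have hab : a ≤ b := S.min'_le _ (S.max'_mem h)
    have hsub : S ⊆ Finset.Icc a b := fun x hx =>
      Finset.mem_Icc.mpr ⟨S.min'_le x hx, S.le_max' x hx⟩
    have hcard : S.card ≤ b - a + 1 := by
      have h1 : S.card ≤ (Finset.Icc a b).card := Finset.card_le_card hsub
      rw [Nat.card_Icc] at h1
      omega
    have ha' := Finset.mem_filter.mp ha
    have hb' := Finset.mem_filter.mp hb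
    have haI := Finset.mem_Ioc.mp ha'.1
    have hP2a : P / 2 ≤ (a : ℝ) := by
      have h1 := Nat.lt_floor_add_one (P / 2)
      have h2 : (⌊P / 2⌋₊ : ℝ) + 1 ≤ (a : ℝ) := by
        exact_mod_cast Nat.succ_le_of_lt haI.1
      linarith
    have hab' : (a : ℝ) ≤ (b : ℝ) := by exact_mod_cast hab
    have hfl : ((⌊(b:ℝ)^c⌋ : ℝ)) - ((⌊(a:ℝ)^c⌋ : ℝ)) ≤ 2 / τ := by
      have h1 : |((K - ⌊(a : ℝ) ^ c⌋ : ℤ) : ℝ)| ≤ 1 / τ := ha'.2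
      have h2 : |((K - ⌊(b : ℝ) ^ c⌋ : ℤ) : ℝ)| ≤ 1 / τ := hb'.2
      rw [abs_le] at h1 h2
      push_cast at h1 h2
      have h3 : 2 / τ = 1 / τ + 1 / τ := by ring
      linarith [h1.1, h1.2, h2.1, h2.2]
    have hup : (b:ℝ)^c - (a:ℝ)^c ≤ 2 / τ + 1 := by
      have h1 : (b:ℝ)^c < (⌊(b:ℝ)^c⌋ : ℝ) + 1 := Int.lt_floor_add_one _
      have h2 : ((⌊(a:ℝ)^c⌋ : ℝ)) ≤ (a:ℝ)^c := Int.floor_le _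
      linarith
    have hmvt := aux_mvt c hc hP2 hP2a hab'
    have hdiff : (b : ℝ) - (a : ℝ) ≤ (2 / τ + 1) / (c * (P / 2) ^ (c - 1)) := by
      rw [le_div_iff₀ hden]
      nlinarith
    have hcast : ((b - a + 1 : ℕ) : ℝ) = (b : ℝ) - a + 1 := by
      push_cast [Nat.cast_sub hab]; ring
    calc (S.card : ℝ) ≤ ((b - a + 1 : ℕ) : ℝ) := by exact_mod_cast hcard
      _ = (b : ℝ) - a + 1 := hcast
      _ ≤ (2 / τ + 1) / (c * (P / 2) ^ (c - 1)) + 1 := by linarith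

theorem stmt_6 (c : ℝ) (hc1 : 1 < c) (hc2 : c < 3) (hc3 : c ≠ 2) :
    ∃ ε₀ > 0, ∀ ε : ℝ, 0 < ε → ε ≤ ε₀ →
      ∃ C > 0, ∃ P₀ : ℝ, ∀ P : ℝ, P₀ ≤ P →
        ∀ τ : ℝ, τ = P ^ (1 - c - ε) →
          (quadU c P τ : ℝ) ≤ C * (P ^ 3 + τ⁻¹ * P ^ (4 - c)) := by
  refine ⟨1, one_pos, fun ε hε hε1 => ?_⟩
  have hc0 : (0:ℝ) < c := by linarith
  refine ⟨1 + 2 ^ (c - 1) / c + 2 ^ c / c, by positivity, 2, fun P hP τ hτ => ?_⟩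
  have hP0 : (0:ℝ) < P := by linarith
  have hτ0 : 0 < τ := hτ ▸ Real.rpow_pos_of_pos hP0 _
  set A := Finset.Ioc ⌊P / 2⌋₊ ⌊P⌋₊ with hA
  set D : ℝ := (2 / τ + 1) / (c * (P / 2) ^ (c - 1)) with hD
  have hD0 : 0 ≤ D := by
    have h1 : (0:ℝ) < c * (P / 2) ^ (c - 1) :=
      mul_pos hc0 (Real.rpow_pos_of_pos (by linarith) _)
    rw [hD]; positivity
  -- step 1
  have step1 : (quadU c P τ : ℝ) ≤ (A.card : ℝ) ^ 3 * (D + 1) := by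
    rw [quadU, Finset.card_eq_sum_card_fiberwise
      (f := fun q : ℕ × ℕ × ℕ × ℕ => (q.1, q.2.1, q.2.2.1)) (t := A ×ˢ A ×ˢ A)
      (by
        intro q hq
        have h1 := (Finset.mem_filter.mp hq).1
        simp only [Finset.mem_coe, Finset.mem_product] at h1 ⊢
        exact ⟨h1.1, h1.2.1, h1.2.2.1⟩), Nat.cast_sum]
    have key : ∀ b ∈ A ×ˢ A ×ˢ A,
        (((((A ×ˢ A ×ˢ A ×ˢ A).filter
          (fun q => |((⌊(q.1 : ℝ) ^ c⌋ + ⌊(q.2.1 : ℝ) ^ c⌋ - ⌊(q.2.2.1 : ℝ) ^ c⌋ -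
            ⌊(q.2.2.2 : ℝ) ^ c⌋ : ℤ) : ℝ)| ≤ 1 / τ)).filter
            (fun q => (q.1, q.2.1, q.2.2.1) = b)).card : ℝ)) ≤ D + 1 := by
      intro b _
      have hinj : ((((A ×ˢ A ×ˢ A ×ˢ A).filter
          (fun q => |((⌊(q.1 : ℝ) ^ c⌋ + ⌊(q.2.1 : ℝ) ^ c⌋ - ⌊(q.2.2.1 : ℝ) ^ c⌋ -
            ⌊(q.2.2.2 : ℝ) ^ c⌋ : ℤ) : ℝ)| ≤ 1 / τ)).filter
            (fun q => (q.1, q.2.1, q.2.2.1) = b)).card) ≤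
          (A.filter (fun n : ℕ =>
            |(((⌊(b.1 : ℝ) ^ c⌋ + ⌊(b.2.1 : ℝ) ^ c⌋ - ⌊(b.2.2 : ℝ) ^ c⌋) - ⌊(n : ℝ) ^ c⌋ : ℤ) : ℝ)|
              ≤ 1 / τ)).card := by
        apply Finset.card_le_card_of_injOn (fun q => q.2.2.2)
        · intro q hq
          simp only [Finset.mem_coe, Finset.mem_filter] at hq ⊢
          obtain ⟨⟨hqmem, hqcond⟩, hqb⟩ := hq
          simp only [Finset.mem_product] at hqmem
          refine ⟨hqmem.2.2.2, ?_⟩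
          have h1 : q.1 = b.1 := congrArg Prod.fst hqb
          have h2 : q.2.1 = b.2.1 := congrArg (fun x => x.2.1) hqb
          have h3 : q.2.2.1 = b.2.2 := congrArg (fun x => x.2.2) hqb
          rw [← h1, ← h2, ← h3]
          exact hqcond
        · intro q hq q' hq' hqq
          simp only [Finset.mem_coe, Finset.mem_filter] at hq hq'
          have heq := hq.2.trans hq'.2.symm
          simp only [Prod.mk.injEq] at heq
          exact Prod.ext heq.1 (Prod.ext heq.2.1 (Prod.ext heq.2.2 hqq))
      calc ((((A ×ˢ A ×ˢ A ×ˢ A).filter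
          (fun q => |((⌊(q.1 : ℝ) ^ c⌋ + ⌊(q.2.1 : ℝ) ^ c⌋ - ⌊(q.2.2.1 : ℝ) ^ c⌋ -
            ⌊(q.2.2.2 : ℝ) ^ c⌋ : ℤ) : ℝ)| ≤ 1 / τ)).filter
            (fun q => (q.1, q.2.1, q.2.2.1) = b)).card : ℝ)
          ≤ ((A.filter (fun n : ℕ =>
            |(((⌊(b.1 : ℝ) ^ c⌋ + ⌊(b.2.1 : ℝ) ^ c⌋ - ⌊(b.2.2 : ℝ) ^ c⌋) - ⌊(n : ℝ) ^ c⌋ : ℤ) : ℝ)|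
              ≤ 1 / τ)).card : ℝ) := by exact_mod_cast hinj
        _ ≤ D + 1 := aux_count c hc1.le P τ hP hτ0 _
    refine le_trans (Finset.sum_le_sum key) ?_
    rw [Finset.sum_const, nsmul_eq_mul, Finset.card_product, Finset.card_product]
    apply le_of_eq
    push_cast
    ring
  have hAcard : (A.card : ℝ) ≤ P := by
    have h1 : A.card ≤ ⌊P⌋₊ := by rw [hA, Nat.card_Ioc]; omega
    calc (A.card : ℝ) ≤ (⌊P⌋₊ : ℝ) := by exact_mod_cast h1
      _ ≤ P := Nat.floor_le hP0.le
  have hP1 : (1:ℝ) ≤ P := by linarith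
  have hPc : P ^ (4 - c) ≤ P ^ (3:ℝ) :=
    Real.rpow_le_rpow_of_exponent_le hP1 (by linarith)
  have hP3 : P ^ (3:ℝ) = P ^ (3:ℕ) := by
    rw [← Real.rpow_natCast]; norm_num
  have hPD : (P:ℝ) ^ (3:ℕ) * D = 2 ^ (c-1) / c * (2 / τ + 1) * P ^ (4 - c) := by
    rw [hD]
    have hhalf : ((P / 2) ^ (c - 1) : ℝ) = P ^ (c-1) / 2 ^ (c-1) :=
      Real.div_rpow hP0.le (by norm_num) (c - 1)
    rw [hhalf]
    have h2c : (0:ℝ) < (2:ℝ) ^ (c-1) := Real.rpow_pos_of_pos two_pos _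
    have hpc : (0:ℝ) < P ^ (c-1) := Real.rpow_pos_of_pos hP0 _
    have hP4 : P ^ (4 - c) * P ^ (c - 1) = P ^ (3:ℕ) := by
      rw [← Real.rpow_add hP0, ← hP3]; norm_num
    rw [← hP4]
    field_simp
  have hquad : (quadU c P τ : ℝ) ≤ P ^ (3:ℕ) * (D + 1) := by
    refine step1.trans ?_
    exact mul_le_mul_of_nonneg_right
      (pow_le_pow_left₀ (by positivity) hAcard 3) (by linarith)
  have hfin : P ^ (3:ℕ) * (D + 1) ≤
      (1 + 2 ^ (c - 1) / c + 2 ^ c / c) * (P ^ (3:ℕ) + τ⁻¹ * P ^ (4 - c)) := by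
    have h2c : (2:ℝ) ^ c = 2 * 2 ^ (c-1) := by
      have h := Real.rpow_one_add' (x := (2:ℝ)) (y := c - 1) (by norm_num)
        (by intro h; exact hc0.ne' (by linarith))
      rw [show (1:ℝ) + (c - 1) = c by ring] at h
      exact h
    have e1 : P ^ (3:ℕ) * (D + 1) = P ^ (3:ℕ) + P ^ (3:ℕ) * D := by ring
    rw [e1, hPD]
    have h2cp : (0:ℝ) < (2:ℝ) ^ (c-1) := Real.rpow_pos_of_pos two_pos _
    have hPc' : (0:ℝ) < P ^ (4-c) := Real.rpow_pos_of_pos hP0 _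
    have hPc3 : P ^ (4 - c) ≤ P ^ (3:ℕ) := hP3 ▸ hPc
    have expand : 2 ^ (c-1) / c * (2 / τ + 1) * P ^ (4 - c) =
        (2 ^ c / c) * (τ⁻¹ * P ^ (4-c)) + (2 ^ (c-1) / c) * P ^ (4-c) := by
      rw [h2c]; field_simp [hc0.ne', hτ0.ne']
    rw [expand]
    have t1 : (2 ^ (c-1) / c) * P ^ (4-c) ≤ (2 ^ (c-1) / c) * P ^ (3:ℕ) :=
      mul_le_mul_of_nonneg_left hPc3 (by positivity)
    have ht : (0:ℝ) ≤ τ⁻¹ * P ^ (4-c) := by positivity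
    have hp3 : (0:ℝ) ≤ P ^ (3:ℕ) := by positivity
    nlinarith [mul_nonneg (le_of_lt (by positivity : (0:ℝ) < 2 ^ c / c)) hp3,
      mul_nonneg (le_of_lt (by positivity : (0:ℝ) < 2 ^ (c-1) / c)) ht]
  calc (quadU c P τ : ℝ) ≤ P ^ (3:ℕ) * (D + 1) := hquad
    _ ≤ (1 + 2 ^ (c - 1) / c + 2 ^ c / c) * (P ^ (3:ℕ) + τ⁻¹ * P ^ (4 - c)) := hfin
    _ = (1 + 2 ^ (c - 1) / c + 2 ^ c / c) * (P ^ 3 + τ⁻¹ * P ^ (4 - c)) := by norm_num
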